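/- Let A be an m × n 0–1 matrix where every row has weight r and the inner product of any two distinct rows is at most λ with r > λ. Let ℓ = ⌊mr/n⌋ and write mr = nℓ + t with 0 ≤ t ≤ n−1. Then m(m−1)λ ≥ (n−t)ℓ² + t(ℓ+1)² − mr. -/

import Mathlib

theorem johnson_improved (m n r lam ℓ t : ℕ) (hn : 0 < n)
    (A : Fin m → Fin n → ℕ)
    (h01 : ∀ i j, A i j = 0 ∨ A i j = 1)
    (hrow : ∀ i, ∑ j, A i j = r)
    (hip : ∀ i i' : Fin m, i ≠ i' → ∑ j, A i j * A i' j ≤ lam)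
    (hrl : r > lam)
    (hℓ : ℓ = m * r / n) (ht : m * r = n * ℓ + t) (htn : t ≤ n - 1) :
    (m : ℤ) * ((m : ℤ) - 1) * lam ≥
      ((n : ℤ) - t) * (ℓ : ℤ) ^ 2 + (t : ℤ) * ((ℓ : ℤ) + 1) ^ 2 - (m : ℤ) * r := by
  classical
  set c : Fin n → ℤ := fun j => ∑ i, (A i j : ℤ) with hc
  have hsum : ∑ j, c j = (m : ℤ) * r := by
    rw [Finset.sum_comm]
    have h1 : ∀ i : Fin m, ∑ j, (A i j : ℤ) = (r : ℤ) := by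
      intro i
      rw [← Nat.cast_sum, hrow]
    simp [h1, Finset.sum_const, mul_comm]
  -- sum of squares equals double sum of inner products
  have hexp : ∀ j, (c j) ^ 2 = ∑ i, ∑ i', (A i j : ℤ) * (A i' j : ℤ) := by
    intro j
    rw [sq, hc, Finset.sum_mul_sum]
  have hsq : ∑ j, (c j) ^ 2 = ∑ i, ∑ i', ∑ j, (A i j : ℤ) * (A i' j : ℤ) := by
    simp only [hexp]
    rw [Finset.sum_comm]
    exact Finset.sum_congr rfl fun i _ => Finset.sum_comm
  -- diagonal terms
  have hdiag : ∀ i : Fin m, ∑ j, (A i j : ℤ) * (A i j : ℤ) = (r : ℤ) := by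
    intro i
    have : ∀ j, (A i j : ℤ) * (A i j : ℤ) = (A i j : ℤ) := by
      intro j
      rcases h01 i j with h | h <;> simp [h]
    rw [Finset.sum_congr rfl fun j _ => this j, ← Nat.cast_sum, hrow]
  -- off-diagonal bound
  have hoff : ∀ i : Fin m, ∑ i' ∈ Finset.univ.erase i, ∑ j, (A i j : ℤ) * (A i' j : ℤ)
      ≤ ((m : ℤ) - 1) * lam := by
    intro i
    calc ∑ i' ∈ Finset.univ.erase i, ∑ j, (A i j : ℤ) * (A i' j : ℤ)
        ≤ ∑ i' ∈ Finset.univ.erase i, (lam : ℤ) := by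
          refine Finset.sum_le_sum fun i' hi' => ?_
          have hne : i ≠ i' := fun h => (Finset.mem_erase.mp hi').1 h.symm
          have := hip i i' hne
          calc ∑ j, (A i j : ℤ) * (A i' j : ℤ) = ((∑ j, A i j * A i' j : ℕ) : ℤ) := by
                push_cast; ring_nf
            _ ≤ (lam : ℤ) := by exact_mod_cast this
      _ = ((m : ℤ) - 1) * lam := by
          rw [Finset.sum_const]
          have : (Finset.univ.erase i).card = m - 1 := by
            rw [Finset.card_erase_of_mem (Finset.mem_univ i), Finset.card_univ, Fintype.card_fin]
          rw [this, nsmul_eq_mul]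
          have hm : 1 ≤ m := Fin.pos i
          push_cast [hm]
          ring
  have hmain : ∑ j, (c j) ^ 2 ≤ (m : ℤ) * r + (m : ℤ) * (((m : ℤ) - 1) * lam) := by
    rw [hsq]
    have : ∀ i : Fin m, ∑ i', ∑ j, (A i j : ℤ) * (A i' j : ℤ)
        ≤ (r : ℤ) + ((m : ℤ) - 1) * lam := by
      intro i
      rw [← Finset.add_sum_erase _ _ (Finset.mem_univ i), hdiag i]
      exact add_le_add le_rfl (hoff i)
    calc ∑ i : Fin m, ∑ i', ∑ j, (A i j : ℤ) * (A i' j : ℤ)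
        ≤ ∑ _i : Fin m, ((r : ℤ) + ((m : ℤ) - 1) * lam) := Finset.sum_le_sum fun i _ => this i
      _ = (m : ℤ) * ((r : ℤ) + ((m : ℤ) - 1) * lam) := by
          rw [Finset.sum_const, Finset.card_univ, Fintype.card_fin, nsmul_eq_mul]
      _ = (m : ℤ) * r + (m : ℤ) * (((m : ℤ) - 1) * lam) := by ring
  -- convexity lower bound
  have hconv : ∑ j, (c j) ^ 2 ≥ (2 * (ℓ : ℤ) + 1) * ((m : ℤ) * r) - (n : ℤ) * (ℓ * (ℓ + 1)) := by
    have hpt : ∀ j, (c j) ^ 2 ≥ (2 * (ℓ : ℤ) + 1) * c j - (ℓ : ℤ) * (ℓ + 1) := by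
      intro j
      have hcint : ∃ k : ℕ, c j = (k : ℤ) := ⟨∑ i, A i j, by simp [hc]⟩
      obtain ⟨k, hk⟩ := hcint
      rcases le_or_gt (c j) (ℓ : ℤ) with h | h
      · nlinarith
      · have h' : (ℓ : ℤ) + 1 ≤ c j := h
        nlinarith
    calc ∑ j, (c j) ^ 2 ≥ ∑ j, ((2 * (ℓ : ℤ) + 1) * c j - (ℓ : ℤ) * (ℓ + 1)) :=
          Finset.sum_le_sum fun j _ => hpt j
      _ = (2 * (ℓ : ℤ) + 1) * ((m : ℤ) * r) - (n : ℤ) * (ℓ * (ℓ + 1)) := by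
          rw [Finset.sum_sub_distrib, ← Finset.mul_sum, hsum, Finset.sum_const,
            Finset.card_univ, Fintype.card_fin, nsmul_eq_mul]
  have htz : ((m : ℤ) * r) = (n : ℤ) * ℓ + t := by exact_mod_cast ht
  nlinarith [hmain, hconv]
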